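/- For any d, s ∈ ℕ and ε > 0 there exists r ∈ ℕ such that for any polynomial mapping φ ∈ Pol⁰_d([r], 𝕋) there exists a disjoint s-subcollection B in [r] such that dist(φ↓_B(γ), 0) < ε for every γ ∈ F(B). -/

import Mathlib

open Finset

/-- The `β`-derivative of a map `φ : F(A) → H`: `D_β φ (α) = φ(α ∪ β) - φ(α)`. -/
def fsDeriv {ι H : Type*} [DecidableEq ι] [AddCommGroup H]
    (φ : Finset ι → H) (β : Finset ι) : Finset ι → H :=
  fun α => φ (α ∪ β) - φ α

/-- Iterated derivative `D_{β 0} ⋯ D_{β (n-1)} φ`. -/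
def iterDeriv {ι H : Type*} [DecidableEq ι] [AddCommGroup H] :
    {n : ℕ} → (Finset ι → H) → (Fin n → Finset ι) → (Finset ι → H)
  | 0, φ, _ => φ
  | _ + 1, φ, β => iterDeriv (fsDeriv φ (β 0)) (fun i => β i.succ)

/-- `φ : F(A) → H` is polynomial of degree ≤ d: any d+1 pairwise disjoint
derivatives (by finite subsets of `A`) kill `φ` on `F(A)` away from them. -/
def IsPolyDeg {ι H : Type*} [DecidableEq ι] [AddCommGroup H]
    (A : Finset ι) (d : ℕ) (φ : Finset ι → H) : Prop :=
  ∀ β : Fin (d + 1) → Finset ι, (∀ i, β i ⊆ A) →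
    (∀ i j, i ≠ j → Disjoint (β i) (β j)) →
    ∀ α : Finset ι, α ⊆ A → (∀ i, Disjoint α (β i)) → iterDeriv φ β α = 0

/-- `Pol⁰_d(A,H)`: polynomial maps of degree ≤ d vanishing at `∅`. -/
def Pol0 {ι H : Type*} [DecidableEq ι] [AddCommGroup H]
    (A : Finset ι) (d : ℕ) (φ : Finset ι → H) : Prop :=
  IsPolyDeg A d φ ∧ φ (∅ : Finset ι) = 0

/-- `‖x‖`: the distance from a real number `x` to `ℤ`. -/
noncomputable def distToInt (x : ℝ) : ℝ := |x - round x|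


section Aux

variable {H : Type*} [AddCommGroup H]

lemma iterDeriv_succ {n : ℕ} (φ : Finset ℕ → H) (β : Fin (n + 1) → Finset ℕ) :
    iterDeriv φ β = iterDeriv (fsDeriv φ (β 0)) (fun i => β i.succ) := rfl

lemma iterDeriv_cons {n : ℕ} (φ : Finset ℕ → H) (F : Finset ℕ) (β : Fin n → Finset ℕ) :
    iterDeriv φ (Fin.cons F β) = iterDeriv (fsDeriv φ F) β := by
  rw [iterDeriv_succ]
  simp only [Fin.cons_zero, Fin.cons_succ]

lemma isPolyDeg_fsDeriv {d : ℕ} {A F : Finset ℕ} (φ : Finset ℕ → H)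
    (h : IsPolyDeg A (d + 1) φ) (hF : F ⊆ A) :
    IsPolyDeg (A \ F) d (fsDeriv φ F) := by
  intro β hβA hβd α hα hαβ
  have key := h (Fin.cons F β) ?_ ?_ α (hα.trans (sdiff_subset)) ?_
  · rwa [iterDeriv_cons] at key
  · intro i
    refine Fin.cases ?_ ?_ i
    · simpa using hF
    · intro j; simpa using (hβA j).trans sdiff_subset
  · intro i j hij
    revert hij
    refine Fin.cases ?_ ?_ i <;> refine Fin.cases ?_ ?_ j
    · intro h; exact absurd rfl h
    · intro j' _
      simp only [Fin.cons_zero, Fin.cons_succ]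
      exact (Finset.sdiff_disjoint.mono_left (hβA j')).symm
    · intro i' _
      simp only [Fin.cons_zero, Fin.cons_succ]
      exact Finset.sdiff_disjoint.mono_left (hβA i')
    · intro i' j' hne
      simp only [Fin.cons_succ]
      exact hβd j' i' (fun h => hne (by rw [h]))
  · intro i
    refine Fin.cases ?_ ?_ i
    · simpa using Finset.sdiff_disjoint.mono_left hα
    · intro j; simpa using hαβ j

lemma isPolyDeg_zero_const {A : Finset ℕ} (φ : Finset ℕ → H)
    (h : IsPolyDeg A 0 φ) {α : Finset ℕ} (hα : α ⊆ A) : φ α = φ ∅ := by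
  have key := h (fun _ => α) (fun _ => hα)
    (fun i j hij => absurd ((Fin.fin_one_eq_zero i).trans (Fin.fin_one_eq_zero j).symm) hij) ∅ (empty_subset _)
    (fun _ => disjoint_empty_left α)
  have : fsDeriv φ α ∅ = 0 := key
  simpa [fsDeriv, sub_eq_zero] using this

lemma biUnion_union' (s t : Finset ℕ) (f : ℕ → Finset ℕ) :
    (s ∪ t).biUnion f = s.biUnion f ∪ t.biUnion f := by
  ext a; simp [mem_biUnion, mem_union, or_and_right, exists_or]

lemma iterDeriv_comp {n : ℕ} (θ : Finset ℕ → H) (W : ℕ → Finset ℕ)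
    (β : Fin n → Finset ℕ) (α : Finset ℕ) :
    iterDeriv (fun δ => θ (δ.biUnion W)) β α
      = iterDeriv θ (fun i => (β i).biUnion W) (α.biUnion W) := by
  induction n generalizing θ with
  | zero => rfl
  | succ n ih =>
      show iterDeriv (fsDeriv (fun δ => θ (δ.biUnion W)) (β 0)) (fun i => β i.succ) α = _
      have h1 : fsDeriv (fun δ => θ (δ.biUnion W)) (β 0)
          = fun δ => (fsDeriv θ ((β 0).biUnion W)) (δ.biUnion W) := by
        funext δ; simp [fsDeriv, biUnion_union']
      rw [h1, ih]
      rfl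

lemma disjoint_biUnion_of_disjoint (W : ℕ → Finset ℕ)
    (hW : ∀ i j, i ≠ j → Disjoint (W i) (W j))
    {s t : Finset ℕ} (hst : Disjoint s t) :
    Disjoint (s.biUnion W) (t.biUnion W) := by
  rw [Finset.disjoint_biUnion_left]
  intro i hi
  rw [Finset.disjoint_biUnion_right]
  intro j hj
  exact hW i j (fun h => Finset.disjoint_left.mp hst hi (h ▸ hj))

lemma isPolyDeg_comp {d m : ℕ} {B : Finset ℕ} (θ : Finset ℕ → H) (W : ℕ → Finset ℕ)
    (hW : ∀ i j, i ≠ j → Disjoint (W i) (W j))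
    (hWB : ∀ i ∈ Icc 1 m, W i ⊆ B)
    (h : IsPolyDeg B d θ) :
    IsPolyDeg (Icc 1 m) d (fun δ => θ (δ.biUnion W)) := by
  have hsub : ∀ s : Finset ℕ, s ⊆ Icc 1 m → s.biUnion W ⊆ B := by
    intro s hs
    exact biUnion_subset.mpr fun x hx => hWB x (hs hx)
  intro β hβ hdisj α hα hαβ
  rw [iterDeriv_comp]
  exact h _ (fun i => hsub _ (hβ i))
    (fun i j hij => disjoint_biUnion_of_disjoint W hW (hdisj i j hij))
    _ (hsub _ hα) (fun i => disjoint_biUnion_of_disjoint W hW (hαβ i))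

end Aux

lemma norm_coe_le_abs (z : ℝ) : ‖(z : UnitAddCircle)‖ ≤ |z| := by
  rw [UnitAddCircle.norm_eq]
  simpa using round_le z 0

lemma exists_color (k : ℕ) (hk : 0 < k) :
    ∃ col : UnitAddCircle → Fin k, ∀ x y, col x = col y → dist x y < 1 / k := by
  haveI : Fact ((0:ℝ) < 1) := ⟨one_pos⟩
  have hk' : (0:ℝ) < k := by exact_mod_cast hk
  set rep : UnitAddCircle → ℝ := fun x => (AddCircle.equivIco 1 0 x : ℝ) with hrep
  have hrep_mem : ∀ x, rep x ∈ Set.Ico (0:ℝ) 1 := by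
    intro x
    have := (AddCircle.equivIco 1 0 x).2
    simpa using this
  have hrep_coe : ∀ x : UnitAddCircle, ((rep x : ℝ) : UnitAddCircle) = x := by
    intro x
    have h := (AddCircle.equivIco 1 0).symm_apply_apply x
    rwa [AddCircle.equivIco, QuotientAddGroup.equivIcoMod_symm_apply] at h
  have hfloor : ∀ x : UnitAddCircle, ⌊rep x * k⌋₊ < k := by
    intro x
    rw [Nat.floor_lt (mul_nonneg (hrep_mem x).1 hk'.le)]
    calc rep x * k < 1 * k := mul_lt_mul_of_pos_right (hrep_mem x).2 hk'
      _ = k := one_mul _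
  refine ⟨fun x => ⟨⌊rep x * k⌋₊, hfloor x⟩, fun x y hxy => ?_⟩
  have hfl : ⌊rep x * k⌋₊ = ⌊rep y * k⌋₊ := congrArg Fin.val hxy
  have h1 : |rep x * k - rep y * k| < 1 := by
    have hx1 : (⌊rep x * k⌋₊ : ℝ) ≤ rep x * k := Nat.floor_le (mul_nonneg (hrep_mem x).1 hk'.le)
    have hx2 : rep x * k < ⌊rep x * k⌋₊ + 1 := Nat.lt_floor_add_one _
    have hy1 : (⌊rep y * k⌋₊ : ℝ) ≤ rep y * k := Nat.floor_le (mul_nonneg (hrep_mem y).1 hk'.le)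
    have hy2 : rep y * k < ⌊rep y * k⌋₊ + 1 := Nat.lt_floor_add_one _
    rw [hfl] at hx1 hx2
    rw [abs_lt]; constructor <;> linarith
  have h2 : |rep x - rep y| < 1 / k := by
    rw [← sub_mul, abs_mul, abs_of_pos hk'] at h1
    rw [lt_div_iff₀ hk']
    exact h1
  obtain ⟨a, hea⟩ : ∃ a : ℝ, a = rep x := ⟨rep x, rfl⟩
  obtain ⟨b, heb⟩ : ∃ b : ℝ, b = rep y := ⟨rep y, rfl⟩
  have hax : ((a : ℝ) : UnitAddCircle) = x := by rw [hea]; exact hrep_coe x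
  have hbx : ((b : ℝ) : UnitAddCircle) = y := by rw [heb]; exact hrep_coe y
  rw [← hea, ← heb] at h2
  calc dist x y = ‖x - y‖ := dist_eq_norm x y
    _ = ‖((a - b : ℝ) : UnitAddCircle)‖ := by
        rw [← hax, ← hbx]
        norm_cast
    _ ≤ |a - b| := norm_coe_le_abs _
    _ < 1 / k := h2

lemma cluster (m k : ℕ) (hk : 0 < k) :
    ∃ r : ℕ, ∀ φ : Finset ℕ → UnitAddCircle,
      ∃ (F : Finset ℕ) (W : ℕ → Finset ℕ),
        F ⊆ Icc 1 r ∧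
        (∀ i ∈ Icc 1 m, (W i).Nonempty ∧ W i ⊆ Icc 1 r ∧ Disjoint F (W i)) ∧
        (∀ i j, i ≠ j → Disjoint (W i) (W j)) ∧
        (∀ δ ⊆ Icc 1 m, dist (φ (F ∪ δ.biUnion W)) (φ F) < 1 / k) := by
  classical
  obtain ⟨col, hcol⟩ := exists_color k hk
  obtain ⟨ι, _inst, hι⟩ :=
    Combinatorics.Line.exists_mono_in_high_dimension (Fin m → Bool) (Fin k)
  refine ⟨Fintype.card (ι × Fin m), fun φ => ?_⟩
  set r := Fintype.card (ι × Fin m) with hr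
  let e : ι × Fin m ≃ Fin r := Fintype.equivFin _
  let e' : ι × Fin m → ℕ := fun q => (e q : ℕ) + 1
  have he'inj : Function.Injective e' := by
    intro a b h
    exact e.injective (Fin.ext (by simpa [e'] using h))
  have he'mem : ∀ q, e' q ∈ Icc 1 r := by
    intro q
    simp only [e', mem_Icc]
    exact ⟨Nat.le_add_left 1 _, (e q).isLt⟩
  obtain ⟨l, c, hl⟩ := hι (fun f =>
    col (φ ((univ.filter (fun q : ι × Fin m => f q.1 q.2 = true)).image e')))
  set F₀ : Finset (ι × Fin m) :=
    univ.filter (fun q => ∃ w, l.idxFun q.1 = some w ∧ w q.2 = true) with hF₀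
  have hmlt : ∀ n, n ∈ Icc 1 m → n - 1 < m := by intro n hn; simp only [mem_Icc] at hn; omega
  set W₀ : Fin m → Finset (ι × Fin m) :=
    fun j => univ.filter (fun q => l.idxFun q.1 = none ∧ q.2 = j) with hW₀
  set F : Finset ℕ := F₀.image e' with hF
  set W : ℕ → Finset ℕ := fun n =>
    if h : n ∈ Icc 1 m then (W₀ ⟨n - 1, hmlt n h⟩).image e' else ∅ with hW
  -- Claim A
  have claimA : ∀ x : Fin m → Bool,
      univ.filter (fun q : ι × Fin m => ((l.idxFun q.1).getD x) q.2 = true)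
        = F₀ ∪ univ.filter (fun q : ι × Fin m => l.idxFun q.1 = none ∧ x q.2 = true) := by
    intro x
    ext q
    rcases hq : l.idxFun q.1 with _ | w <;>
      simp [hq, hF₀, mem_filter, mem_union]
  -- Claim B
  have claimB : ∀ δ : Finset ℕ, δ ⊆ Icc 1 m →
      (univ.filter (fun q : ι × Fin m =>
          l.idxFun q.1 = none ∧ decide (((q.2 : ℕ) + 1) ∈ δ) = true)).image e'
        = δ.biUnion W := by
    intro δ hδ
    ext a
    simp only [mem_image, mem_filter, mem_univ, true_and, mem_biUnion, decide_eq_true_eq]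
    constructor
    · rintro ⟨q, ⟨hnone, hxq⟩, rfl⟩
      refine ⟨(q.2 : ℕ) + 1, hxq, ?_⟩
      have hmem : ((q.2 : ℕ) + 1) ∈ Icc 1 m := hδ hxq
      rw [hW]
      simp only [dif_pos hmem]
      refine mem_image.mpr ⟨q, ?_, rfl⟩
      rw [hW₀]
      simp only [mem_filter, mem_univ, true_and]
      exact ⟨hnone, Fin.ext (by simp)⟩
    · rintro ⟨n, hnδ, ha⟩
      have hn : n ∈ Icc 1 m := hδ hnδ
      rw [hW] at ha
      simp only [dif_pos hn] at ha
      obtain ⟨q, hq, rfl⟩ := mem_image.mp ha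
      rw [hW₀] at hq
      simp only [mem_filter, mem_univ, true_and] at hq
      refine ⟨q, ⟨hq.1, ?_⟩, rfl⟩
      have : (q.2 : ℕ) = n - 1 := by rw [hq.2]
      have hn1 : 1 ≤ n := by simp only [mem_Icc] at hn; exact hn.1
      have : (q.2 : ℕ) + 1 = n := by omega
      rwa [this]
  -- monochromaticity, transported
  have key : ∀ δ : Finset ℕ, δ ⊆ Icc 1 m → col (φ (F ∪ δ.biUnion W)) = c := by
    intro δ hδ
    have h1 : col (φ ((univ.filter (fun q : ι × Fin m =>
        ((l.idxFun q.1).getD (fun j => decide (((j : ℕ) + 1) ∈ δ))) q.2 = true)).image e')) = c :=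
      hl (fun j => decide (((j : ℕ) + 1) ∈ δ))
    rw [claimA] at h1
    simp only [image_union] at h1
    rw [claimB δ hδ] at h1
    exact h1
  have hFIcc : F ⊆ Icc 1 r := by
    rw [hF]
    exact image_subset_iff.mpr fun q _ => he'mem q
  refine ⟨F, W, hFIcc, ?_, ?_, ?_⟩
  · intro n hn
    refine ⟨?_, ?_, ?_⟩
    · obtain ⟨i0, hi0⟩ := l.proper
      refine ⟨e' (i0, ⟨n - 1, hmlt n hn⟩), ?_⟩
      rw [hW]
      simp only [dif_pos hn]
      refine mem_image.mpr ⟨(i0, ⟨n - 1, hmlt n hn⟩), ?_, rfl⟩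
      rw [hW₀]
      simp [hi0]
    · rw [hW]
      simp only [dif_pos hn]
      exact image_subset_iff.mpr fun q _ => he'mem q
    · rw [hF, hW]
      simp only [dif_pos hn]
      rw [Finset.disjoint_image he'inj]
      rw [Finset.disjoint_left]
      intro q hq hq'
      rw [hF₀] at hq
      rw [hW₀] at hq'
      simp only [mem_filter, mem_univ, true_and] at hq hq'
      obtain ⟨w, hw, _⟩ := hq
      rw [hq'.1] at hw
      cases hw
  · intro i j hij
    by_cases hi : i ∈ Icc 1 m
    · by_cases hj : j ∈ Icc 1 m
      · rw [hW]
        simp only [dif_pos hi, dif_pos hj]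
        rw [Finset.disjoint_image he'inj, Finset.disjoint_left]
        intro q hq hq'
        rw [hW₀] at hq hq'
        simp only [mem_filter, mem_univ, true_and] at hq hq'
        have h1 : (q.2 : ℕ) = i - 1 := by rw [hq.2]
        have h2 : (q.2 : ℕ) = j - 1 := by rw [hq'.2]
        simp only [mem_Icc] at hi hj
        omega
      · rw [hW]
        simp only [dif_neg hj]
        exact disjoint_empty_right _
    · rw [hW]
      simp only [dif_neg hi]
      exact disjoint_empty_left _
  · intro δ hδ
    have h1 := key δ hδ
    have h2 := key ∅ (empty_subset _)
    rw [Finset.biUnion_empty, union_empty] at h2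
    exact hcol _ _ (h1.trans h2.symm)

theorem main_induction (d : ℕ) : ∀ (s : ℕ) (ε : ℝ), 0 < ε →
    ∃ r : ℕ, ∀ φ : Finset ℕ → UnitAddCircle,
      IsPolyDeg (Icc 1 r) d φ →
      ∃ b : Fin s → Finset ℕ,
        (∀ j, (b j).Nonempty ∧ b j ⊆ Icc 1 r) ∧
        (∀ j j', j ≠ j' → Disjoint (b j) (b j')) ∧
        (∀ γ : Finset (Fin s), dist (φ (γ.biUnion b)) (φ ∅) < ε) := by
  induction d with
  | zero =>
      intro s ε hε
      refine ⟨s, fun φ hφ => ⟨fun j => {(j : ℕ) + 1}, ?_, ?_, ?_⟩⟩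
      · intro j
        refine ⟨singleton_nonempty _, ?_⟩
        intro x hx
        rw [mem_singleton] at hx
        subst hx
        simp only [mem_Icc]
        exact ⟨Nat.le_add_left 1 _, j.isLt⟩
      · intro j j' hjj'
        rw [disjoint_singleton]
        intro h
        exact hjj' (Fin.ext (by omega))
      · intro γ
        have hsub : γ.biUnion (fun j => ({(j : ℕ) + 1} : Finset ℕ)) ⊆ Icc 1 s := by
          rw [biUnion_subset]
          intro j _
          intro x hx
          rw [mem_singleton] at hx
          subst hx
          simp only [mem_Icc]
          exact ⟨Nat.le_add_left 1 _, j.isLt⟩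
        rw [isPolyDeg_zero_const φ hφ hsub]
        simpa using hε
  | succ d ih =>
      intro s ε hε
      obtain ⟨m, hm⟩ := ih s (ε / 2) (by positivity)
      set k : ℕ := ⌈(2 : ℝ) / ε⌉₊ with hkdef
      have hk : 0 < k := Nat.ceil_pos.mpr (by positivity)
      have hkε : 1 / (k : ℝ) ≤ ε / 2 := by
        have h1 : (2 : ℝ) / ε ≤ k := Nat.le_ceil _
        have h2 : (0 : ℝ) < 2 / ε := by positivity
        have hk0 : (0:ℝ) < k := by exact_mod_cast hk
        rw [div_le_div_iff₀ hk0 (by norm_num : (0:ℝ) < 2)]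
        have h3 := (div_le_iff₀ hε).mp h1
        linarith
      obtain ⟨r, hr⟩ := cluster m k hk
      refine ⟨r, fun φ hφ => ?_⟩
      obtain ⟨F, W, hFr, hWgood, hWdisj, hclose⟩ := hr φ
      have hθ : IsPolyDeg ((Icc 1 r) \ F) d (fsDeriv φ F) := isPolyDeg_fsDeriv φ hφ hFr
      have hθ' : IsPolyDeg (Icc 1 m) d (fun δ => fsDeriv φ F (δ.biUnion W)) := by
        refine isPolyDeg_comp _ W hWdisj ?_ hθ
        intro i hi
        rw [subset_sdiff]
        exact ⟨(hWgood i hi).2.1, ((hWgood i hi).2.2).symm⟩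
      obtain ⟨cb, hcb1, hcb2, hcb3⟩ := hm _ hθ'
      refine ⟨fun j => (cb j).biUnion W, ?_, ?_, ?_⟩
      · intro j
        constructor
        · obtain ⟨n, hn⟩ := (hcb1 j).1
          obtain ⟨x, hx⟩ := (hWgood n ((hcb1 j).2 hn)).1
          exact ⟨x, mem_biUnion.mpr ⟨n, hn, hx⟩⟩
        · rw [biUnion_subset]
          intro n hn
          exact (hWgood n ((hcb1 j).2 hn)).2.1
      · intro j j' hjj'
        exact disjoint_biUnion_of_disjoint W hWdisj (hcb2 j j' hjj')
      · intro γ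
        have hUeq : γ.biUnion (fun j => (cb j).biUnion W) = (γ.biUnion cb).biUnion W :=
          (Finset.biUnion_biUnion γ cb W).symm
        set δ : Finset ℕ := γ.biUnion cb with hδdef
        have hδ : δ ⊆ Icc 1 m := by
          rw [hδdef, biUnion_subset]
          intro j _
          exact (hcb1 j).2
        set U : Finset ℕ := δ.biUnion W with hUdef
        have h1 : dist (φ (F ∪ U)) (φ F) < 1 / k := hclose δ hδ
        have h2 : dist (fsDeriv φ F (δ.biUnion W)) (fsDeriv φ F ((∅ : Finset ℕ).biUnion W))
            < ε / 2 := hcb3 γ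
        rw [Finset.biUnion_empty] at h2
        rw [hUeq]
        have hident : φ U - φ ∅ = (φ (F ∪ U) - φ F) - (fsDeriv φ F U - fsDeriv φ F ∅) := by
          simp only [fsDeriv, union_comm, empty_union, union_empty]
          abel
        calc dist (φ U) (φ ∅) = ‖φ U - φ ∅‖ := dist_eq_norm _ _
          _ = ‖(φ (F ∪ U) - φ F) - (fsDeriv φ F U - fsDeriv φ F ∅)‖ := by rw [hident]
          _ ≤ ‖φ (F ∪ U) - φ F‖ + ‖fsDeriv φ F U - fsDeriv φ F ∅‖ := norm_sub_le _ _
          _ < 1 / k + ε / 2 := by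
              rw [← dist_eq_norm, ← dist_eq_norm]
              exact add_lt_add_of_lt_of_lt h1 h2
          _ ≤ ε / 2 + ε / 2 := by linarith
          _ = ε := by ring

/-- Corollary: for any d, s ∈ ℕ and ε > 0 there is r such that every
`φ ∈ Pol⁰_d([r], 𝕋)` has a disjoint s-subcollection `B` in `[r]` with all the
values of the subpolynomial `φ↓_B` ε-close to 0. -/
theorem pol0_torus_small_subpolynomial (d s : ℕ) (ε : ℝ) (hε : 0 < ε) :
    ∃ r : ℕ, ∀ φ : Finset ℕ → UnitAddCircle,
      Pol0 (Finset.Icc 1 r) d φ →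
      ∃ b : Fin s → Finset ℕ,
        (∀ j, (b j).Nonempty ∧ b j ⊆ Finset.Icc 1 r) ∧
        (∀ j j', j ≠ j' → Disjoint (b j) (b j')) ∧
        (∀ γ : Finset (Fin s), dist (φ (γ.biUnion b)) 0 < ε) := by
  obtain ⟨r, hr⟩ := main_induction d s ε hε
  refine ⟨r, fun φ hφ => ?_⟩
  obtain ⟨b, hb1, hb2, hb3⟩ := hr φ hφ.1
  refine ⟨b, hb1, hb2, fun γ => ?_⟩
  have h := hb3 γ
  rwa [hφ.2] at h
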